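/- Let 1<p<∞ and let Λ={λ_k}_{k∈ℤ} be a sequence of distinct nonzero complex numbers satisfying conditions (i), (ii), (iii') of the characterization theorem: (i) the Carleson condition in each half-plane together with inf_{k≠j}|λ_k−λ_j|>0; (ii) the generating function S(z)=lim_{R→∞}∏_{|λ_k|<R}(1−z/λ_k) exists and is entire of exponential type π; (iii') F(x)^p satisfies the (A_p) condition, where F(x)=|S(x)|/dist(x,Λ). Then ∫_ℝ |S(x)|^p dx = ∞. -/

import Mathlib

open MeasureTheory Filter Metric

noncomputable section
open scoped ENNReal

/-- `f` is an entire-type bound: exponential type at most `τ`. -/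
def ExpTypeLe (τ : ℝ) (f : ℂ → ℂ) : Prop :=
  ∀ ε > (0 : ℝ), ∃ C : ℝ, ∀ z : ℂ, ‖f z‖ ≤ C * Real.exp ((τ + ε) * ‖z‖)

/-- `f` has exponential type exactly `τ`. -/
def ExpTypeEq (τ : ℝ) (f : ℂ → ℂ) : Prop :=
  ExpTypeLe τ f ∧ ∀ σ : ℝ, ExpTypeLe σ f → τ ≤ σ

/-- Membership in the Paley–Wiener space `L^p_π`: entire, of exponential type at most `π`,
with restriction to `ℝ` in `L^p`. -/
def MemPW (p : ℝ) (f : ℂ → ℂ) : Prop :=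
  Differentiable ℂ f ∧ ExpTypeLe Real.pi f ∧
    MeasureTheory.MemLp (fun x : ℝ => f x) (ENNReal.ofReal p)

/-- The weight `e^{-pπ|Im λ|}(1+|Im λ|)` appearing in the data condition. -/
def PWWeight (p : ℝ) (lam : ℂ) : ℝ :=
  Real.exp (-(p * Real.pi * |lam.im|)) * (1 + |lam.im|)

/-- `Λ` is a complete interpolating sequence for `L^p_π`. -/
def IsCIS (p : ℝ) (Λ : ℤ → ℂ) : Prop :=
  ∀ a : ℤ → ℂ,
    Summable (fun k => ‖a k‖ ^ p * PWWeight p (Λ k)) →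
    ∃! f : ℂ → ℂ, MemPW p f ∧ ∀ k : ℤ, f (Λ k) = a k

/-- Carleson condition for `Λ ∩ {Im z > a}` in the half-plane `{Im z > a}`,
expressed via uniform lower bounds on finite subproducts. -/
def CarlesonAbove (a : ℝ) (Λ : ℤ → ℂ) : Prop :=
  ∃ c > (0 : ℝ), ∀ j : ℤ, a < (Λ j).im → ∀ F : Finset ℤ,
    (∀ k ∈ F, a < (Λ k).im ∧ k ≠ j) →
    c ≤ ∏ k ∈ F,
      ‖(Λ j - Λ k) / (Λ j - (starRingEnd ℂ) (Λ k) - 2 * (a : ℂ) * Complex.I)‖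

/-- Carleson condition for `Λ ∩ {Im z < a}` in the half-plane `{Im z < a}`. -/
def CarlesonBelow (a : ℝ) (Λ : ℤ → ℂ) : Prop :=
  ∃ c > (0 : ℝ), ∀ j : ℤ, (Λ j).im < a → ∀ F : Finset ℤ,
    (∀ k ∈ F, (Λ k).im < a ∧ k ≠ j) →
    c ≤ ∏ k ∈ F,
      ‖(Λ j - Λ k) / (Λ j - (starRingEnd ℂ) (Λ k) - 2 * (a : ℂ) * Complex.I)‖

/-- Uniform separation: `inf_{k ≠ j} |λ_k - λ_j| > 0`. -/
def Separated (Λ : ℤ → ℂ) : Prop :=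
  ∃ δ > (0 : ℝ), ∀ j k : ℤ, j ≠ k → δ ≤ ‖Λ j - Λ k‖

/-- `S` is the generating function of `Λ`:
`S(z) = lim_{R→∞} ∏_{|λ_k| < R} (1 - z/λ_k)` (the index sets being finite). -/
def HasGenFun (Λ : ℤ → ℂ) (S : ℂ → ℂ) : Prop :=
  (∀ R : ℝ, {k : ℤ | ‖Λ k‖ < R}.Finite) ∧
  ∀ z : ℂ, Tendsto (fun R : ℝ => ∏ᶠ k ∈ {k : ℤ | ‖Λ k‖ < R}, (1 - z / Λ k))
    atTop (nhds (S z))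

/-- `dist(x, Λ)` for real `x`. -/
def distToSeq (Λ : ℤ → ℂ) (x : ℝ) : ℝ := Metric.infDist (x : ℂ) (Set.range Λ)

/-- `F(x) = |S(x)| / dist(x, Λ)`. -/
def Ffun (Λ : ℤ → ℂ) (S : ℂ → ℂ) (x : ℝ) : ℝ := ‖S x‖ / distToSeq Λ x

/-- The Muckenhoupt `(A_p)` condition for a weight `v` on `ℝ`. -/
def MuckAp (p : ℝ) (v : ℝ → ℝ) : Prop :=
  (∀ a b : ℝ, a < b → IntervalIntegrable v MeasureTheory.volume a b ∧
      IntervalIntegrable (fun x => v x ^ (-(p - 1)⁻¹)) MeasureTheory.volume a b) ∧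
  ∃ C : ℝ, ∀ a b : ℝ, a < b →
    ((b - a)⁻¹ * ∫ x in a..b, v x) *
      ((b - a)⁻¹ * ∫ x in a..b, v x ^ (-(p - 1)⁻¹)) ^ (p - 1) ≤ C

/-- The discrete Muckenhoupt `(A_p)` condition for a sequence `w`. -/
def DiscreteAp (p : ℝ) (w : ℤ → ℝ) : Prop :=
  ∃ C : ℝ, ∀ k : ℤ, ∀ n : ℕ, 0 < n →
    ((n : ℝ)⁻¹ * ∑ j ∈ Finset.Icc (k + 1) (k + (n : ℤ)), w j) *
      ((n : ℝ)⁻¹ * ∑ j ∈ Finset.Icc (k + 1) (k + (n : ℤ)), w j ^ (-(p - 1)⁻¹)) ^ (p - 1) ≤ C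

/-- `z` lies in the closed square `Q(x, r)` with center `x ∈ ℝ`, side `2r`,
sides parallel to the axes. -/
def InSquare (z : ℂ) (x r : ℝ) : Prop := |z.re - x| ≤ r ∧ |z.im| ≤ r

/-- A set of complex numbers is relatively dense. -/
def RelDense (A : Set ℂ) : Prop := ∃ r₀ > (0 : ℝ), ∀ x : ℝ, ∃ z ∈ A, InSquare z x r₀



lemma countable_of_isolated_aux {Z : Set ℂ}
    (h : ∀ z ∈ Z, ∃ r > (0:ℝ), ∀ w ∈ Z, dist w z < r → w = z) : Z.Countable := by
  classical
  choose! r hr0 hr using h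
  have key : ∀ z1 ∈ Z, ∀ z2 ∈ Z, z1 ≠ z2 →
      Disjoint (Metric.ball z1 (r z1 / 2)) (Metric.ball z2 (r z2 / 2)) := by
    intro z1 h1 z2 h2 hne
    rw [Set.disjoint_left]
    intro w hw1 hw2
    rw [Metric.mem_ball] at hw1 hw2
    have htri : dist z1 z2 ≤ dist w z1 + dist w z2 := by
      rw [dist_comm w z1]; exact dist_triangle z1 w z2
    rcases le_total (r z1) (r z2) with hle | hle
    · exact hne (hr z2 h2 z1 h1 (by linarith))
    · have htri2 : dist z2 z1 ≤ dist w z1 + dist w z2 := by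
        rw [dist_comm z2 z1] at *; exact htri
      exact hne.symm (hr z1 h1 z2 h2 (by linarith))
  have hd : Pairwise (Function.onFun Disjoint fun z : Z => Metric.ball (z : ℂ) (r z / 2)) := by
    intro a b hab
    exact key a a.2 b b.2 (Subtype.coe_injective.ne hab)
  have : Countable Z := by
    refine hd.countable_of_isOpen_disjoint (fun i => Metric.isOpen_ball) (fun i => ?_)
    exact Metric.nonempty_ball.mpr (by have := hr0 i i.2; positivity)
  exact Set.countable_coe_iff.mp this

lemma zeroset_countable {S : ℂ → ℂ} (hSent : Differentiable ℂ S) (hS0 : S 0 ≠ 0) :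
    {z : ℂ | S z = 0}.Countable := by
  apply countable_of_isolated_aux
  intro z hz
  rcases (hSent.analyticAt z).eventually_eq_zero_or_eventually_ne_zero with h | h
  · exfalso
    have hU : AnalyticOnNhd ℂ S Set.univ := fun w _ => hSent.analyticAt w
    have := hU.eqOn_zero_of_preconnected_of_eventuallyEq_zero isPreconnected_univ
      (Set.mem_univ z) h
    exact hS0 (this (Set.mem_univ 0))
  · rw [eventually_nhdsWithin_iff] at h
    rcases Metric.eventually_nhds_iff.mp h with ⟨ε, hε, hball⟩
    refine ⟨ε, hε, fun w hw hdw => ?_⟩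
    by_contra hne
    exact hball hdw hne hw

lemma genfun_at_zero {Λ : ℤ → ℂ} {S : ℂ → ℂ}
    (hS : ∀ z : ℂ, Tendsto (fun R : ℝ => ∏ᶠ k ∈ {k : ℤ | ‖Λ k‖ < R}, (1 - z / Λ k))
      atTop (nhds (S z))) : S 0 = 1 := by
  have h := hS 0
  have he : (fun R : ℝ => ∏ᶠ k ∈ {k : ℤ | ‖Λ k‖ < R}, (1 - (0:ℂ) / Λ k))
      = fun _ => (1 : ℂ) := by
    funext R; simp [finprod_mem_one]
  rw [he] at h
  exact (tendsto_nhds_unique h tendsto_const_nhds)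

lemma distzero_countable {Λ : ℤ → ℂ} {δ : ℝ} (hδ : 0 < δ)
    (hsep : ∀ j k : ℤ, j ≠ k → δ ≤ ‖Λ j - Λ k‖) :
    {x : ℝ | Metric.infDist (x : ℂ) (Set.range Λ) = 0}.Countable := by
  have hsub : {x : ℝ | Metric.infDist (x : ℂ) (Set.range Λ) = 0} ⊆
      Complex.re '' Set.range Λ := by
    intro x hx
    simp only [Set.mem_setOf_eq] at hx
    have hne : (Set.range Λ).Nonempty := ⟨Λ 0, Set.mem_range_self 0⟩
    have h1 : Metric.infDist (x : ℂ) (Set.range Λ) < δ / 2 := by rw [hx]; positivity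
    rcases (Metric.infDist_lt_iff hne).mp h1 with ⟨y, hy, hdy⟩
    rcases hy with ⟨k, rfl⟩
    have hxk : (x : ℂ) = Λ k := by
      by_contra hne2
      have hpos : 0 < dist (x : ℂ) (Λ k) := dist_pos.mpr hne2
      have h2 : Metric.infDist (x : ℂ) (Set.range Λ) < min (dist (x : ℂ) (Λ k)) (δ / 2) := by
        rw [hx]; exact lt_min hpos (by positivity)
      rcases (Metric.infDist_lt_iff hne).mp h2 with ⟨y', hy', hdy'⟩
      rcases hy' with ⟨k', rfl⟩
      have hkk : k' ≠ k := by
        rintro rfl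
        exact absurd hdy' (by simp [lt_min_iff])
      have := hsep k' k hkk
      rw [← Complex.dist_eq] at this
      have htri : dist (Λ k') (Λ k) ≤ dist (Λ k') (x : ℂ) + dist (x : ℂ) (Λ k) :=
        dist_triangle _ _ _
      rw [dist_comm (Λ k') (x : ℂ)] at htri
      have h3 : dist (x : ℂ) (Λ k') < δ / 2 := lt_of_lt_of_le hdy' (min_le_right _ _)
      linarith
    exact ⟨Λ k, Set.mem_range_self k, by rw [← hxk, Complex.ofReal_re]⟩
  exact ((Set.countable_range Λ).image Complex.re).mono hsub

lemma holder_aux {p : ℝ} (hp : 1 < p) {v : ℝ → ℝ} (hv : Measurable v)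
    (hv0 : ∀ᵐ x : ℝ, 0 < v x) {a b : ℝ}
    (hvi : IntegrableOn v (Set.Ioc a b))
    (hσi : IntegrableOn (fun x => v x ^ (-(p - 1)⁻¹)) (Set.Ioc a b))
    {E : Set ℝ} (hE : MeasurableSet E) (hEI : E ⊆ Set.Ioc a b) :
    (volume E).toReal ^ p ≤
      (∫ x in E, v x) * (∫ x in Set.Ioc a b, v x ^ (-(p - 1)⁻¹)) ^ (p - 1) := by
  have hp0 : (0:ℝ) < p := by linarith
  have hp1 : (0:ℝ) < p - 1 := by linarith
  set q : ℝ := p / (p - 1) with hq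
  have hpq : p.HolderConjugate q := Real.HolderConjugate.conjExponent hp
  set V : ℝ → ℝ≥0∞ := fun x => ENNReal.ofReal (v x) with hV
  set A : ℝ := ∫ x in E, v x with hA
  set B : ℝ := ∫ x in Set.Ioc a b, v x ^ (-(p - 1)⁻¹) with hB
  have hvnn : ∀ᵐ x : ℝ, 0 ≤ v x := hv0.mono fun x hx => hx.le
  have hσnn : ∀ᵐ x : ℝ, 0 ≤ v x ^ (-(p - 1)⁻¹) :=
    hvnn.mono fun x hx => Real.rpow_nonneg hx _
  have hA0 : 0 ≤ A := setIntegral_nonneg_of_ae_restrict (ae_restrict_of_ae hvnn)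
  have hB0 : 0 ≤ B := setIntegral_nonneg_of_ae_restrict (ae_restrict_of_ae hσnn)
  -- a.e. facts restricted to E
  have hv0E : ∀ᵐ x ∂(volume.restrict E), 0 < v x := ae_restrict_of_ae hv0
  have hVm : Measurable V := hv.ennreal_ofReal
  -- step 1 : volume E = ∫⁻ f * g over E
  have step1 : volume E = ∫⁻ x in E, (V x ^ (1/p)) * (V x ^ (-(1/p))) := by
    rw [← setLIntegral_one]
    refine lintegral_congr_ae ?_
    filter_upwards [hv0E] with x hx
    have hV0 : V x ≠ 0 := by simp [hV, ENNReal.ofReal_eq_zero, not_le, hx]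
    have hVt : V x ≠ ⊤ := ENNReal.ofReal_ne_top
    rw [← ENNReal.rpow_add _ _ hV0 hVt]
    norm_num
  -- Hölder
  have step2 : ∫⁻ x in E, (V x ^ (1/p)) * (V x ^ (-(1/p))) ≤
      (∫⁻ x in E, (V x ^ (1/p)) ^ p) ^ (1/p) * (∫⁻ x in E, (V x ^ (-(1/p))) ^ q) ^ (1/q) := by
    exact ENNReal.lintegral_mul_le_Lp_mul_Lq _ hpq
      (hVm.pow measurable_const).aemeasurable (hVm.pow measurable_const).aemeasurable
  have e1 : ∀ x : ℝ, (V x ^ (1/p)) ^ p = V x := by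
    intro x
    rw [← ENNReal.rpow_mul, one_div, inv_mul_cancel₀ (ne_of_gt hp0), ENNReal.rpow_one]
  have e2 : ∀ x : ℝ, (V x ^ (-(1/p))) ^ q = V x ^ (-(p-1)⁻¹) := by
    intro x
    rw [← ENNReal.rpow_mul]
    congr 1
    rw [hq]; field_simp
  have eq3 : ∫⁻ x in E, (V x ^ (1/p)) ^ p = ENNReal.ofReal A := by
    simp_rw [e1]
    rw [hA, ← ofReal_integral_eq_lintegral_ofReal (hvi.mono_set hEI)
      (ae_restrict_of_ae hvnn)]
  have le4 : ∫⁻ x in E, (V x ^ (-(1/p))) ^ q ≤ ENNReal.ofReal B := by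
    simp_rw [e2]
    have hle : ∫⁻ x in E, V x ^ (-(p-1)⁻¹) ≤ ∫⁻ x in Set.Ioc a b, V x ^ (-(p-1)⁻¹) :=
      lintegral_mono_set hEI
    refine hle.trans (le_of_eq ?_)
    have heq : ∫⁻ x in Set.Ioc a b, V x ^ (-(p-1)⁻¹)
        = ∫⁻ x in Set.Ioc a b, ENNReal.ofReal (v x ^ (-(p-1)⁻¹)) := by
      refine lintegral_congr_ae ?_
      filter_upwards [ae_restrict_of_ae hv0] with x hx
      rw [hV, ENNReal.ofReal_rpow_of_pos hx]
    rw [heq, hB, ← ofReal_integral_eq_lintegral_ofReal hσi (ae_restrict_of_ae hσnn)]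
  have main : volume E ≤ (ENNReal.ofReal A) ^ (1/p) * (ENNReal.ofReal B) ^ (1/q) := by
    rw [step1]
    refine step2.trans ?_
    rw [eq3]
    exact mul_le_mul_right (ENNReal.rpow_le_rpow le4 (le_of_lt (by positivity : (0:ℝ) < 1/q))) _
  -- raise to power p
  have hp' : volume E ^ p ≤ ENNReal.ofReal A * (ENNReal.ofReal B) ^ (p - 1) := by
    have h1 : volume E ^ p ≤ ((ENNReal.ofReal A) ^ (1/p) * (ENNReal.ofReal B) ^ (1/q)) ^ p :=
      ENNReal.rpow_le_rpow main hp0.le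
    refine h1.trans_eq ?_
    rw [ENNReal.mul_rpow_of_nonneg _ _ hp0.le, ← ENNReal.rpow_mul, ← ENNReal.rpow_mul,
      one_div, inv_mul_cancel₀ (ne_of_gt hp0), ENNReal.rpow_one]
    congr 1
    rw [hq]; field_simp
  have hfin : ENNReal.ofReal A * (ENNReal.ofReal B) ^ (p - 1) =
      ENNReal.ofReal (A * B ^ (p - 1)) := by
    rw [ENNReal.ofReal_mul hA0, ENNReal.ofReal_rpow_of_nonneg hB0 hp1.le]
  rw [hfin] at hp'
  have := ENNReal.toReal_le_of_le_ofReal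
    (mul_nonneg hA0 (Real.rpow_nonneg hB0 _)) hp'
  rwa [← ENNReal.toReal_rpow] at this


lemma ap_interval {p C : ℝ} (hp : 1 < p) {v : ℝ → ℝ}
    (h : ∀ a b : ℝ, a < b → ((b - a)⁻¹ * ∫ x in a..b, v x) *
      ((b - a)⁻¹ * ∫ x in a..b, v x ^ (-(p - 1)⁻¹)) ^ (p - 1) ≤ C)
    {a b : ℝ} (hab : a < b)
    (hB : 0 ≤ ∫ x in Set.Ioc a b, v x ^ (-(p - 1)⁻¹)) :
    (∫ x in Set.Ioc a b, v x) * (∫ x in Set.Ioc a b, v x ^ (-(p - 1)⁻¹)) ^ (p - 1)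
      ≤ C * (b - a) ^ p := by
  have h0 : (0:ℝ) < b - a := by linarith
  have hp1 : (0:ℝ) < p - 1 := by linarith
  set A : ℝ := ∫ x in Set.Ioc a b, v x with hA
  set B : ℝ := ∫ x in Set.Ioc a b, v x ^ (-(p - 1)⁻¹) with hB'
  have h1 : ((b - a)⁻¹ * A) * ((b - a)⁻¹ * B) ^ (p - 1) ≤ C := by
    have := h a b hab
    rwa [intervalIntegral.integral_of_le hab.le, intervalIntegral.integral_of_le hab.le] at this
  have e1 : ((b - a)⁻¹ * B) ^ (p - 1) = ((b - a) ^ (p - 1))⁻¹ * B ^ (p - 1) := by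
    rw [Real.mul_rpow (inv_nonneg.mpr h0.le) hB, Real.inv_rpow h0.le]
  have e2 : (b - a) ^ p = (b - a) * (b - a) ^ (p - 1) := by
    have hpe : p = 1 + (p - 1) := by ring
    rw [hpe, Real.rpow_add h0, Real.rpow_one]
    ring_nf
  have hbpos : (0:ℝ) < (b - a) ^ (p - 1) := Real.rpow_pos_of_pos h0 _
  have key : A * B ^ (p - 1) =
      (((b - a)⁻¹ * A) * (((b - a) ^ (p - 1))⁻¹ * B ^ (p - 1))) * ((b - a) * (b - a) ^ (p - 1)) := by
    field_simp
  rw [key, e2]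
  rw [e1] at h1
  have hmul : (0:ℝ) ≤ (b - a) * (b - a) ^ (p - 1) := by positivity
  calc (((b - a)⁻¹ * A) * (((b - a) ^ (p - 1))⁻¹ * B ^ (p - 1))) * ((b - a) * (b - a) ^ (p - 1))
      ≤ C * ((b - a) * (b - a) ^ (p - 1)) := by
        apply mul_le_mul_of_nonneg_right _ hmul
        rw [← mul_assoc] at h1 ⊢
        exact h1
    _ = C * ((b - a) * (b - a) ^ (p - 1)) := rfl

lemma key_lower {p C : ℝ} (hp : 1 < p) {v : ℝ → ℝ} (hv : Measurable v)
    (hv0 : ∀ᵐ x : ℝ, 0 < v x)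
    {a b : ℝ} (hab : a < b)
    (hvi : IntegrableOn v (Set.Ioc a b))
    (hσi : IntegrableOn (fun x => v x ^ (-(p - 1)⁻¹)) (Set.Ioc a b))
    (hap : (∫ x in Set.Ioc a b, v x) * (∫ x in Set.Ioc a b, v x ^ (-(p - 1)⁻¹)) ^ (p - 1)
      ≤ C * (b - a) ^ p)
    {E : Set ℝ} (hE : MeasurableSet E) (hEI : E ⊆ Set.Ioc a b) :
    (∫ x in Set.Ioc a b, v x) * (volume E).toReal ^ p ≤ (∫ x in E, v x) * (C * (b - a) ^ p) := by
  have hvnn : ∀ᵐ x : ℝ, 0 ≤ v x := hv0.mono fun x hx => hx.le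
  have hA0 : 0 ≤ ∫ x in Set.Ioc a b, v x :=
    setIntegral_nonneg_of_ae_restrict (ae_restrict_of_ae hvnn)
  have hE0 : 0 ≤ ∫ x in E, v x :=
    setIntegral_nonneg_of_ae_restrict (ae_restrict_of_ae hvnn)
  have hh := holder_aux hp hv hv0 hvi hσi hE hEI
  calc (∫ x in Set.Ioc a b, v x) * (volume E).toReal ^ p
      ≤ (∫ x in Set.Ioc a b, v x) *
        ((∫ x in E, v x) * (∫ x in Set.Ioc a b, v x ^ (-(p - 1)⁻¹)) ^ (p - 1)) :=
        mul_le_mul_of_nonneg_left hh hA0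
    _ = (∫ x in E, v x) *
        ((∫ x in Set.Ioc a b, v x) * (∫ x in Set.Ioc a b, v x ^ (-(p - 1)⁻¹)) ^ (p - 1)) := by ring
    _ ≤ (∫ x in E, v x) * (C * (b - a) ^ p) := mul_le_mul_of_nonneg_left hap hE0

lemma good_measure {Λ : ℤ → ℂ} {δ : ℝ} (hδ : 0 < δ)
    (hsep : ∀ j k : ℤ, j ≠ k → δ ≤ ‖Λ j - Λ k‖) {L : ℝ} (hL : δ ≤ L) :
    L / 2 ≤ (volume (Set.Ioc (-L) L ∩
      {x : ℝ | δ/8 ≤ Metric.infDist (x : ℂ) (Set.range Λ)})).toReal := by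
  classical
  have hL0 : 0 < L := lt_of_lt_of_le hδ hL
  set I : Set ℝ := Set.Ioc (-L) L with hI
  set I'' : Set ℝ := Set.Ioc (-L - 3*δ/8) (L + 3*δ/8) with hI''
  set d : ℝ → ℝ := fun x => Metric.infDist (x : ℂ) (Set.range Λ) with hd
  set Bad : Set ℝ := {x : ℝ | d x < δ/8} with hBad
  set Bset : ℤ → Set ℝ := fun k =>
    if |(Λ k).im| < δ/8 then Metric.ball ((Λ k).re) (δ/8) else ∅ with hBset
  set Jset : ℤ → Set ℝ := fun k =>
    if |(Λ k).im| < δ/8 then Metric.ball ((Λ k).re) (δ/4) else ∅ with hJset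
  -- claim 1 : Bad ⊆ ⋃ Bset
  have claim1 : Bad ⊆ ⋃ k, Bset k := by
    intro x hx
    have hne : (Set.range Λ).Nonempty := ⟨Λ 0, Set.mem_range_self 0⟩
    rcases (Metric.infDist_lt_iff hne).mp hx with ⟨y, ⟨k, rfl⟩, hdy⟩
    have habs : ‖(x : ℂ) - Λ k‖ < δ/8 := by
      rwa [Complex.dist_eq] at hdy
    have him : |(Λ k).im| < δ/8 := by
      have h1 : |((x : ℂ) - Λ k).im| ≤ ‖(x : ℂ) - Λ k‖ := Complex.abs_im_le_norm _
      simp only [Complex.sub_im, Complex.ofReal_im, zero_sub, abs_neg] at h1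
      linarith
    have hre : |x - (Λ k).re| < δ/8 := by
      have h1 : |((x : ℂ) - Λ k).re| ≤ ‖(x : ℂ) - Λ k‖ := Complex.abs_re_le_norm _
      simp only [Complex.sub_re, Complex.ofReal_re] at h1
      linarith
    refine Set.mem_iUnion.mpr ⟨k, ?_⟩
    rw [hBset]
    simp only [if_pos him]
    rwa [Metric.mem_ball, Real.dist_eq]
  -- claim 2 : Jset pairwise disjoint
  have claim2 : Pairwise (Function.onFun Disjoint Jset) := by
    intro j k hjk
    simp only [Function.onFun, hJset]
    by_cases hj : |(Λ j).im| < δ/8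
    · by_cases hk : |(Λ k).im| < δ/8
      · rw [if_pos hj, if_pos hk]
        apply Metric.ball_disjoint_ball
        rw [Real.dist_eq]
        -- |Re λj - Re λk| ≥ δ/2
        have hsepjk := hsep j k hjk
        have hsq : δ^2 ≤ ((Λ j).re - (Λ k).re)^2 + ((Λ j).im - (Λ k).im)^2 := by
          have h1 : δ^2 ≤ ‖Λ j - Λ k‖ ^ 2 := by
            have := norm_nonneg (Λ j - Λ k)
            nlinarith
          rwa [Complex.sq_norm, Complex.normSq_apply, Complex.sub_re, Complex.sub_im,
            ← pow_two, ← pow_two] at h1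
        have him2 : ((Λ j).im - (Λ k).im)^2 ≤ (δ/4)^2 := by
          have h1 : |(Λ j).im - (Λ k).im| ≤ δ/4 := by
            have h2 := abs_add_le ((Λ j).im) (-(Λ k).im)
            rw [abs_neg] at h2
            rw [sub_eq_add_neg]
            linarith
          nlinarith [abs_nonneg ((Λ j).im - (Λ k).im), sq_abs ((Λ j).im - (Λ k).im)]
        have hre2 : (δ/2)^2 ≤ ((Λ j).re - (Λ k).re)^2 := by nlinarith
        have : δ/2 ≤ |(Λ j).re - (Λ k).re| := by
          nlinarith [abs_nonneg ((Λ j).re - (Λ k).re), sq_abs ((Λ j).re - (Λ k).re)]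
        linarith
      · rw [if_neg hk]; exact Set.disjoint_empty _
    · rw [if_neg hj]; exact Set.empty_disjoint _
  -- claim 3
  have claim3 : ∀ k : ℤ, volume (Bset k ∩ I) ≤ 2⁻¹ * volume (Jset k ∩ I'') := by
    intro k
    by_cases hk : |(Λ k).im| < δ/8
    · rcases Set.eq_empty_or_nonempty (Bset k ∩ I) with he | ⟨x, hx1, hx2⟩
      · rw [he]; simp
      · have hxb : |x - (Λ k).re| < δ/8 := by
          have := hx1
          rw [hBset] at this
          simp only [if_pos hk] at this
          rwa [Metric.mem_ball, Real.dist_eq] at this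
        have hxI : -L < x ∧ x ≤ L := hx2
        have hJsub : Jset k ⊆ I'' := by
          intro y hy
          rw [hJset] at hy
          simp only [if_pos hk] at hy
          rw [Metric.mem_ball, Real.dist_eq] at hy
          have h1 : |y - (Λ k).re| < δ/4 := hy
          rw [hI'']
          constructor
          · cases' abs_lt.mp h1 with h1a h1b
            cases' abs_lt.mp hxb with h2a h2b
            linarith [hxI.1]
          · cases' abs_lt.mp h1 with h1a h1b
            cases' abs_lt.mp hxb with h2a h2b
            linarith [hxI.2]
        have h2 : volume (Jset k ∩ I'') = ENNReal.ofReal (δ/2) := by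
          rw [Set.inter_eq_left.mpr hJsub, hJset]
          simp only [if_pos hk]
          rw [Real.volume_ball]
          congr 1; ring
        have h3 : volume (Bset k ∩ I) ≤ ENNReal.ofReal (δ/4) := by
          refine le_trans (measure_mono Set.inter_subset_left) ?_
          rw [hBset]; simp only [if_pos hk]
          rw [Real.volume_ball]
          apply ENNReal.ofReal_le_ofReal; linarith
        rw [h2]
        refine h3.trans (le_of_eq ?_)
        rw [show ((2:ℝ≥0∞))⁻¹ = ENNReal.ofReal (2⁻¹ : ℝ) by
          rw [ENNReal.ofReal_inv_of_pos two_pos, ENNReal.ofReal_ofNat]]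
        rw [← ENNReal.ofReal_mul (by norm_num)]
        congr 1; ring
    · have : Bset k = ∅ := by rw [hBset]; simp [hk]
      rw [this]; simp
  -- claim 4
  have claim4 : volume (Bad ∩ I) ≤ 2⁻¹ * volume I'' := by
    calc volume (Bad ∩ I) ≤ volume (⋃ k, Bset k ∩ I) := by
          refine measure_mono ?_
          intro x ⟨hx1, hx2⟩
          rcases Set.mem_iUnion.mp (claim1 hx1) with ⟨k, hk⟩
          exact Set.mem_iUnion.mpr ⟨k, hk, hx2⟩
      _ ≤ ∑' k, volume (Bset k ∩ I) := measure_iUnion_le _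
      _ ≤ ∑' k, 2⁻¹ * volume (Jset k ∩ I'') := ENNReal.tsum_le_tsum claim3
      _ = 2⁻¹ * ∑' k, volume (Jset k ∩ I'') := ENNReal.tsum_mul_left
      _ = 2⁻¹ * volume (⋃ k, Jset k ∩ I'') := by
          congr 1
          refine (measure_iUnion ?_ ?_).symm
          · intro j k hjk
            exact (claim2 hjk).mono Set.inter_subset_left Set.inter_subset_left
          · intro k
            refine MeasurableSet.inter ?_ measurableSet_Ioc
            rw [hJset]
            by_cases hk : |(Λ k).im| < δ/8
            · simp only [if_pos hk]; exact measurableSet_ball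
            · simp only [if_neg hk]; exact MeasurableSet.empty
      _ ≤ 2⁻¹ * volume I'' := by
          refine mul_le_mul_right (measure_mono ?_) _
          exact Set.iUnion_subset fun k => Set.inter_subset_right
  -- conclude
  have hgood : I ⊆ (I ∩ {x : ℝ | δ/8 ≤ d x}) ∪ (Bad ∩ I) := by
    intro x hx
    by_cases hxd : δ/8 ≤ d x
    · exact Or.inl ⟨hx, hxd⟩
    · exact Or.inr ⟨by rw [hBad]; exact lt_of_not_ge hxd, hx⟩
  have hIvol : volume I = ENNReal.ofReal (2*L) := by
    rw [hI, Real.volume_Ioc]; congr 1; ring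
  have hI''vol : volume I'' = ENNReal.ofReal (2*L + 3*δ/4) := by
    rw [hI'', Real.volume_Ioc]; congr 1; ring
  have hmeas : volume I ≤ volume (I ∩ {x : ℝ | δ/8 ≤ d x}) + volume (Bad ∩ I) :=
    le_trans (measure_mono hgood) (measure_union_le _ _)
  have hfin1 : volume (I ∩ {x : ℝ | δ/8 ≤ d x}) ≠ ⊤ := by
    refine ne_top_of_le_ne_top ?_ (measure_mono Set.inter_subset_left)
    rw [hIvol]; exact ENNReal.ofReal_ne_top
  have hbadle : volume (Bad ∩ I) ≤ ENNReal.ofReal (L + 3*δ/8) := by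
    refine claim4.trans ?_
    rw [hI''vol]
    rw [show ((2:ℝ≥0∞))⁻¹ = ENNReal.ofReal (2⁻¹ : ℝ) by
      rw [ENNReal.ofReal_inv_of_pos two_pos, ENNReal.ofReal_ofNat]]
    rw [← ENNReal.ofReal_mul (by norm_num)]
    apply ENNReal.ofReal_le_ofReal
    nlinarith
  have hchain : ENNReal.ofReal (2*L) ≤
      volume (I ∩ {x : ℝ | δ/8 ≤ d x}) + ENNReal.ofReal (L + 3*δ/8) := by
    rw [← hIvol]
    exact hmeas.trans (add_le_add_right hbadle _)
  have htr : 2*L ≤ (volume (I ∩ {x : ℝ | δ/8 ≤ d x})).toReal + (L + 3*δ/8) := by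
    have h1 := ENNReal.toReal_mono (by
      exact ENNReal.add_ne_top.mpr ⟨hfin1, ENNReal.ofReal_ne_top⟩) hchain
    rw [ENNReal.toReal_ofReal (by positivity)] at h1
    rw [ENNReal.toReal_add hfin1 ENNReal.ofReal_ne_top,
      ENNReal.toReal_ofReal (by positivity)] at h1
    linarith
  have hfinal : L/2 ≤ (volume (I ∩ {x : ℝ | δ/8 ≤ d x})).toReal := by linarith
  exact hfinal

lemma ap_unbounded {p C : ℝ} (hp : 1 < p) (hC : 0 < C) {v : ℝ → ℝ} (hv : Measurable v)
    (hv0 : ∀ᵐ x : ℝ, 0 < v x)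
    (hvI : ∀ a b : ℝ, a < b → IntegrableOn v (Set.Ioc a b))
    (hσI : ∀ a b : ℝ, a < b → IntegrableOn (fun x => v x ^ (-(p - 1)⁻¹)) (Set.Ioc a b))
    (hap : ∀ a b : ℝ, a < b →
      (∫ x in Set.Ioc a b, v x) * (∫ x in Set.Ioc a b, v x ^ (-(p - 1)⁻¹)) ^ (p - 1)
        ≤ C * (b - a) ^ p)
    {δ K : ℝ} (hδ : 0 < δ)
    (hbound : ∀ L : ℝ, δ ≤ L → (∫ x in Set.Ioc (-L) L, v x) ≤ K) : False := by
  have hp0 : (0:ℝ) < p := by linarith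
  have hvnn : ∀ᵐ x : ℝ, 0 ≤ v x := hv0.mono fun x hx => hx.le
  -- A and basic properties
  set A : ℝ → ℝ := fun L => ∫ x in Set.Ioc (-L) L, v x with hA
  have hA_nonneg : ∀ L, 0 ≤ A L := fun L =>
    setIntegral_nonneg_of_ae_restrict (ae_restrict_of_ae hvnn)
  have hA_mono : ∀ L L' : ℝ, 0 < L → L ≤ L' → A L ≤ A L' := by
    intro L L' hL hLL
    apply setIntegral_mono_set (hvI _ _ (by linarith)) (ae_restrict_of_ae hvnn)
    exact HasSubset.Subset.eventuallyLE (Set.Ioc_subset_Ioc (by linarith) hLL)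
  -- positivity of A δ
  have hAδ : 0 < A δ := by
    have hab : -δ < δ := by linarith
    rw [hA]
    rw [setIntegral_pos_iff_support_of_nonneg_ae (ae_restrict_of_ae hvnn) (hvI _ _ hab)]
    have hnull : volume {x : ℝ | ¬ 0 < v x} = 0 := ae_iff.mp hv0
    have hsub : Set.Ioc (-δ) δ ⊆
        (Function.support v ∩ Set.Ioc (-δ) δ) ∪ {x | ¬ 0 < v x} := by
      intro x hx
      by_cases h : 0 < v x
      · exact Or.inl ⟨ne_of_gt h, hx⟩
      · exact Or.inr h
    have h1 : volume (Set.Ioc (-δ) δ) ≤ volume (Function.support v ∩ Set.Ioc (-δ) δ) := by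
      calc volume (Set.Ioc (-δ) δ)
          ≤ volume ((Function.support v ∩ Set.Ioc (-δ) δ) ∪ {x | ¬ 0 < v x}) :=
            measure_mono hsub
        _ ≤ volume (Function.support v ∩ Set.Ioc (-δ) δ) + volume {x | ¬ 0 < v x} :=
            measure_union_le _ _
        _ = volume (Function.support v ∩ Set.Ioc (-δ) δ) := by rw [hnull, add_zero]
    have h2 : (0:ℝ≥0∞) < volume (Set.Ioc (-δ) δ) := by
      rw [Real.volume_Ioc]
      exact ENNReal.ofReal_pos.mpr (by linarith)
    exact lt_of_lt_of_le h2 h1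
  -- growth step
  set θ : ℝ := (C * 3 ^ p)⁻¹ with hθ
  have h3p : (0:ℝ) < 3 ^ p := Real.rpow_pos_of_pos (by norm_num) p
  have hθ0 : 0 < θ := by rw [hθ]; positivity
  have hgrow : ∀ L : ℝ, δ ≤ L → (1 + θ) * A L ≤ A (3 * L) := by
    intro L hLδ
    have hL0 : 0 < L := lt_of_lt_of_le hδ hLδ
    have hab : -(3 * L) < 3 * L := by linarith
    have hEsub : Set.Ioc L (3 * L) ⊆ Set.Ioc (-(3 * L)) (3 * L) :=
      Set.Ioc_subset_Ioc (by linarith) le_rfl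
    have hkl := key_lower hp hv hv0 hab (hvI _ _ hab) (hσI _ _ hab) (hap _ _ hab)
      measurableSet_Ioc hEsub
    have hvol : (volume (Set.Ioc L (3 * L))).toReal = 2 * L := by
      rw [Real.volume_Ioc, ENNReal.toReal_ofReal (by linarith)]; ring
    have e1 : (3 * L - -(3 * L)) = 6 * L := by ring
    have e2 : ((6:ℝ) * L) ^ p = 3 ^ p * (2 * L) ^ p := by
      rw [← Real.mul_rpow (by norm_num) (by positivity)]
      congr 1; ring
    rw [hvol, e1, e2] at hkl
    have h2Lp : (0:ℝ) < (2 * L) ^ p := Real.rpow_pos_of_pos (by linarith) p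
    have hEv : A (3 * L) ≤ (∫ x in Set.Ioc L (3 * L), v x) * (C * 3 ^ p) := by
      apply le_of_mul_le_mul_right _ h2Lp
      calc A (3 * L) * (2 * L) ^ p
          ≤ (∫ x in Set.Ioc L (3 * L), v x) * (C * (3 ^ p * (2 * L) ^ p)) := hkl
        _ = (∫ x in Set.Ioc L (3 * L), v x) * (C * 3 ^ p) * (2 * L) ^ p := by ring
    have hsplit : A L + (∫ x in Set.Ioc L (3 * L), v x) ≤ A (3 * L) := by
      have hunion : Set.Ioc (-L) L ∪ Set.Ioc L (3 * L) = Set.Ioc (-L) (3 * L) :=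
        Set.Ioc_union_Ioc_eq_Ioc (by linarith) (by linarith)
      have hdisj : Disjoint (Set.Ioc (-L) L) (Set.Ioc L (3 * L)) :=
        Set.Ioc_disjoint_Ioc_of_le le_rfl
      have h1 : ∫ x in Set.Ioc (-L) (3 * L), v x
          = A L + ∫ x in Set.Ioc L (3 * L), v x := by
        rw [← hunion, setIntegral_union hdisj measurableSet_Ioc
          (hvI _ _ (by linarith)) (hvI _ _ (by linarith))]
      have h2 : ∫ x in Set.Ioc (-L) (3 * L), v x ≤ A (3 * L) := by
        apply setIntegral_mono_set (hvI _ _ hab) (ae_restrict_of_ae hvnn)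
        exact HasSubset.Subset.eventuallyLE (Set.Ioc_subset_Ioc (by linarith) le_rfl)
      linarith
    have hEvge : A (3 * L) * θ ≤ ∫ x in Set.Ioc L (3 * L), v x := by
      rw [hθ, ← div_eq_mul_inv, div_le_iff₀ (by positivity)]
      exact hEv
    have hALle : A L ≤ A (3 * L) := hA_mono L (3 * L) hL0 (by linarith)
    have hmul : A L * θ ≤ A (3 * L) * θ := mul_le_mul_of_nonneg_right hALle hθ0.le
    nlinarith
  -- iteration
  have hiter : ∀ n : ℕ, (1 + θ) ^ n * A δ ≤ A (3 ^ n * δ) := by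
    intro n
    induction n with
    | zero => simp
    | succ n ih =>
      have h3n : (1:ℝ) ≤ 3 ^ n := one_le_pow₀ (by norm_num)
      have h3 : δ ≤ (3:ℝ) ^ n * δ := by nlinarith
      have hg := hgrow ((3:ℝ) ^ n * δ) h3
      have he : 3 * ((3:ℝ) ^ n * δ) = 3 ^ (n + 1) * δ := by ring
      rw [he] at hg
      calc (1 + θ) ^ (n + 1) * A δ = (1 + θ) * ((1 + θ) ^ n * A δ) := by ring
        _ ≤ (1 + θ) * A (3 ^ n * δ) := by
            apply mul_le_mul_of_nonneg_left ih (by linarith)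
        _ ≤ A (3 ^ (n + 1) * δ) := hg
  -- contradiction
  obtain ⟨n, hn⟩ := pow_unbounded_of_one_lt (K / A δ) (by linarith : (1:ℝ) < 1 + θ)
  have hb : (1 + θ) ^ n * A δ ≤ K := by
    refine (hiter n).trans (hbound _ ?_)
    have h3n : (1:ℝ) ≤ 3 ^ n := one_le_pow₀ (by norm_num)
    nlinarith
  rw [div_lt_iff₀ hAδ] at hn
  linarith

/-- under (i), (ii), (iii'), `∫ |S(x)|^p dx = ∞`. -/
theorem stmt_12 (p : ℝ) (hp : 1 < p) (Λ : ℤ → ℂ)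
    (hinj : Function.Injective Λ) (h0 : ∀ k : ℤ, Λ k ≠ 0)
    (hcarU : CarlesonAbove 0 Λ) (hcarL : CarlesonBelow 0 Λ) (hsep : Separated Λ)
    (S : ℂ → ℂ) (hS : HasGenFun Λ S) (hSent : Differentiable ℂ S)
    (htype : ExpTypeEq Real.pi S)
    (hAp : MuckAp p (fun x => Ffun Λ S x ^ p)) :
    ¬ MeasureTheory.Integrable (fun x : ℝ => ‖S x‖ ^ p)
        MeasureTheory.volume := by
  intro hint
  classical
  obtain ⟨δ, hδ, hsepδ⟩ := hsep
  have hsep' : ∀ j k : ℤ, j ≠ k → δ ≤ ‖Λ j - Λ k‖ := hsepδ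
  have hp0 : (0:ℝ) < p := by linarith
  -- measurability
  have hconts : Continuous fun x : ℝ => ‖S (x:ℂ)‖ :=
    continuous_norm.comp (hSent.continuous.comp Complex.continuous_ofReal)
  have hcontd : Continuous (distToSeq Λ) :=
    (Metric.continuous_infDist_pt _).comp Complex.continuous_ofReal
  have hFm : Measurable (Ffun Λ S) :=
    (hconts.measurable).div hcontd.measurable
  have hvm : Measurable (fun x => Ffun Λ S x ^ p) := hFm.pow measurable_const
  -- a.e. positivity of the weight
  have hS0 : S 0 = 1 := genfun_at_zero hS.2
  have hzc : {x : ℝ | S (x:ℂ) = 0}.Countable := by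
    have h := zeroset_countable hSent (by rw [hS0]; exact one_ne_zero)
    refine ((h.image Complex.re).mono ?_)
    intro x hx
    exact ⟨(x:ℂ), hx, Complex.ofReal_re x⟩
  have hdc : {x : ℝ | distToSeq Λ x = 0}.Countable := by
    have h := distzero_countable hδ hsep'
    refine h.mono ?_
    intro x hx
    simpa [distToSeq] using hx
  have hv0 : ∀ᵐ x : ℝ, 0 < Ffun Λ S x ^ p := by
    have hN : volume ({x : ℝ | S (x:ℂ) = 0} ∪ {x : ℝ | distToSeq Λ x = 0}) = 0 :=
      Set.Countable.measure_zero (hzc.union hdc) _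
    rw [ae_iff]
    refine measure_mono_null ?_ hN
    intro x hx
    simp only [Set.mem_setOf_eq, not_lt] at hx
    by_contra hxn
    simp only [Set.mem_union, Set.mem_setOf_eq] at hxn
    push_neg at hxn
    have hs : S (x:ℂ) ≠ 0 := hxn.1
    have hd : distToSeq Λ x ≠ 0 := hxn.2
    have hdpos : 0 < distToSeq Λ x := by
      refine lt_of_le_of_ne ?_ (Ne.symm hd)
      simp only [distToSeq]
      exact Metric.infDist_nonneg
    have hF : 0 < Ffun Λ S x := by
      simp only [Ffun]
      exact div_pos (norm_pos_iff.mpr hs) hdpos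
    have : 0 < Ffun Λ S x ^ p := Real.rpow_pos_of_pos hF p
    exact absurd hx (not_le.mpr this)
  -- A_p data
  obtain ⟨hAint, C, hC⟩ := hAp
  set C' : ℝ := max C 1 with hC'
  have hC'0 : (0:ℝ) < C' := lt_of_lt_of_le one_pos (le_max_right _ _)
  have hvI : ∀ a b : ℝ, a < b → IntegrableOn (fun x => Ffun Λ S x ^ p) (Set.Ioc a b) :=
    fun a b hab =>
      (intervalIntegrable_iff_integrableOn_Ioc_of_le hab.le).mp (hAint a b hab).1
  have hσI : ∀ a b : ℝ, a < b →
      IntegrableOn (fun x => (Ffun Λ S x ^ p) ^ (-(p - 1)⁻¹)) (Set.Ioc a b) :=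
    fun a b hab =>
      (intervalIntegrable_iff_integrableOn_Ioc_of_le hab.le).mp (hAint a b hab).2
  have hap : ∀ a b : ℝ, a < b →
      (∫ x in Set.Ioc a b, Ffun Λ S x ^ p) *
        (∫ x in Set.Ioc a b, (Ffun Λ S x ^ p) ^ (-(p - 1)⁻¹)) ^ (p - 1)
        ≤ C' * (b - a) ^ p := by
    intro a b hab
    refine ap_interval hp (fun a b hab => (hC a b hab).trans (le_max_left _ _)) hab ?_
    exact setIntegral_nonneg_of_ae_restrict (ae_restrict_of_ae
      (hv0.mono fun x hx => Real.rpow_nonneg hx.le _))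
  -- integrable u data
  have hunn : ∀ x : ℝ, 0 ≤ ‖S (x:ℂ)‖ ^ p :=
    fun x => Real.rpow_nonneg (norm_nonneg _) _
  set M : ℝ := ∫ x : ℝ, ‖S (x:ℂ)‖ ^ p with hM
  have hM0 : 0 ≤ M := integral_nonneg hunn
  -- boundedness of A L
  have hbound : ∀ L : ℝ, δ ≤ L →
      (∫ x in Set.Ioc (-L) L, Ffun Λ S x ^ p) ≤ (8/δ) ^ p * M * C' * 4 ^ p := by
    intro L hLδ
    have hL0 : 0 < L := lt_of_lt_of_le hδ hLδ
    have hab : -L < L := by linarith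
    set G : Set ℝ := Set.Ioc (-L) L ∩
      {x : ℝ | δ/8 ≤ Metric.infDist (x : ℂ) (Set.range Λ)} with hG
    have hGmeas : MeasurableSet G := by
      refine measurableSet_Ioc.inter ?_
      have : Continuous fun x : ℝ => Metric.infDist (x : ℂ) (Set.range Λ) :=
        (Metric.continuous_infDist_pt _).comp Complex.continuous_ofReal
      exact (isClosed_le continuous_const this).measurableSet
    have hGsub : G ⊆ Set.Ioc (-L) L := Set.inter_subset_left
    have hkl := key_lower hp hvm hv0 hab (hvI _ _ hab) (hσI _ _ hab) (hap _ _ hab)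
      hGmeas hGsub
    have hμG : L/2 ≤ (volume G).toReal := good_measure hδ hsep' hLδ
    -- pointwise bound on G
    have hpoint : ∀ x ∈ G, Ffun Λ S x ^ p ≤ (8/δ) ^ p * ‖S (x:ℂ)‖ ^ p := by
      intro x hx
      have hdx : δ/8 ≤ distToSeq Λ x := hx.2
      have hd0 : 0 < distToSeq Λ x := lt_of_lt_of_le (by positivity) hdx
      have h1 : Ffun Λ S x ≤ (8/δ) * ‖S (x:ℂ)‖ := by
        simp only [Ffun]
        rw [div_le_iff₀ hd0]
        have h2 : (1:ℝ) ≤ (8/δ) * distToSeq Λ x := by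
          rw [← div_le_iff₀' (by positivity : (0:ℝ) < 8/δ)]
          calc (1:ℝ) / (8/δ) = δ/8 := by field_simp
            _ ≤ distToSeq Λ x := hdx
        calc ‖S (x:ℂ)‖ = ‖S (x:ℂ)‖ * 1 := (mul_one _).symm
          _ ≤ ‖S (x:ℂ)‖ * ((8/δ) * distToSeq Λ x) :=
              mul_le_mul_of_nonneg_left h2 (norm_nonneg _)
          _ = (8/δ) * ‖S (x:ℂ)‖ * distToSeq Λ x := by ring
      have hFnn : 0 ≤ Ffun Λ S x := by
        simp only [Ffun]
        exact div_nonneg (norm_nonneg _) hd0.le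
      calc Ffun Λ S x ^ p ≤ ((8/δ) * ‖S (x:ℂ)‖) ^ p :=
            Real.rpow_le_rpow hFnn h1 hp0.le
        _ = (8/δ) ^ p * ‖S (x:ℂ)‖ ^ p := by
            rw [Real.mul_rpow (by positivity) (norm_nonneg _)]
    have hint2 : ∫ x in G, Ffun Λ S x ^ p ≤ (8/δ) ^ p * M := by
      calc ∫ x in G, Ffun Λ S x ^ p
          ≤ ∫ x in G, (8/δ) ^ p * ‖S (x:ℂ)‖ ^ p := by
            refine setIntegral_mono_on ((hvI _ _ hab).mono_set hGsub)
              ((hint.const_mul _).integrableOn) hGmeas hpoint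
        _ = (8/δ) ^ p * ∫ x in G, ‖S (x:ℂ)‖ ^ p := integral_const_mul _ _
        _ ≤ (8/δ) ^ p * M := by
            refine mul_le_mul_of_nonneg_left ?_ (by positivity)
            exact setIntegral_le_integral hint (Filter.Eventually.of_forall hunn)
    have e1 : (L - -L) = 2 * L := by ring
    have e2 : ((2:ℝ) * L) ^ p = 4 ^ p * (L/2) ^ p := by
      rw [← Real.mul_rpow (by norm_num) (by positivity)]
      congr 1; ring
    rw [e1, e2] at hkl
    have hA0 : 0 ≤ ∫ x in Set.Ioc (-L) L, Ffun Λ S x ^ p :=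
      setIntegral_nonneg_of_ae_restrict (ae_restrict_of_ae
        (hv0.mono fun x hx => hx.le))
    have hfin : (∫ x in Set.Ioc (-L) L, Ffun Λ S x ^ p) * (L/2) ^ p ≤
        ((8/δ) ^ p * M * C' * 4 ^ p) * (L/2) ^ p := by
      calc (∫ x in Set.Ioc (-L) L, Ffun Λ S x ^ p) * (L/2) ^ p
          ≤ (∫ x in Set.Ioc (-L) L, Ffun Λ S x ^ p) * ((volume G).toReal) ^ p := by
            refine mul_le_mul_of_nonneg_left ?_ hA0
            exact Real.rpow_le_rpow (by positivity) hμG hp0.le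
        _ ≤ (∫ x in G, Ffun Λ S x ^ p) * (C' * (4 ^ p * (L/2) ^ p)) := hkl
        _ ≤ ((8/δ) ^ p * M) * (C' * (4 ^ p * (L/2) ^ p)) := by
            refine mul_le_mul_of_nonneg_right hint2 ?_
            positivity
        _ = ((8/δ) ^ p * M * C' * 4 ^ p) * (L/2) ^ p := by ring
    exact le_of_mul_le_mul_right hfin (Real.rpow_pos_of_pos (by linarith) p)
  exact ap_unbounded hp hC'0 hvm hv0 hvI hσI hap hδ hbound
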